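/- Let λ ∈ P_N with all entries positive only in weakly decreasing order, and define ℓ_i = λ_i - i. Then ∇(s_λ) = ∑_{i ∈ [N], λ - e_i ∈ P_N} (ℓ_i + N) s_{λ - e_i}, where s_λ = s_{λ/(0,...,0)} is the Schur polynomial. -/

import Mathlib

open MvPolynomial

/-- The complete homogeneous symmetric polynomial `h_n` in `N` variables,
with `h_n = 0` for `n < 0`. -/
noncomputable def hh (N : ℕ) (n : ℤ) : MvPolynomial (Fin N) ℤ :=
  if 0 ≤ n then ∑ d ∈ Finset.Nat.antidiagonalTuple N n.toNat, ∏ i, X i ^ d i else 0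

/-- The diagonal derivative `∇ = ∂/∂x_1 + ⋯ + ∂/∂x_N`. -/
noncomputable def nabla (N : ℕ) (f : MvPolynomial (Fin N) ℤ) : MvPolynomial (Fin N) ℤ :=
  ∑ i, pderiv i f

/-- `a ∈ P_N`: weakly decreasing tuples of nonnegative integers. -/
def IsPar {N : ℕ} (a : Fin N → ℤ) : Prop :=
  (∀ i j : Fin N, i ≤ j → a j ≤ a i) ∧ ∀ i, 0 ≤ a i

/-- The skew Schur polynomial, defined by the Jacobi–Trudi formula. -/
noncomputable def skewSchur (N : ℕ) (lam mu : Fin N → ℤ) : MvPolynomial (Fin N) ℤ :=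
  Matrix.det (Matrix.of fun i j : Fin N => hh N (lam i - mu j - (i : ℤ) + (j : ℤ)))

/-- The tuple `e_k` with `1` in position `k` and `0` elsewhere. -/
def ee {N : ℕ} (k : Fin N) : Fin N → ℤ := fun i => if i = k then 1 else 0

instance {N : ℕ} (a : Fin N → ℤ) : Decidable (IsPar a) := by unfold IsPar; infer_instance

namespace NablaSchurAux

variable {N : ℕ}

lemma nabla_sum {α : Type*} (s : Finset α) (f : α → MvPolynomial (Fin N) ℤ) :
    nabla N (∑ x ∈ s, f x) = ∑ x ∈ s, nabla N (f x) := by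
  simp only [nabla, map_sum]
  exact Finset.sum_comm

lemma nabla_mul (f g : MvPolynomial (Fin N) ℤ) :
    nabla N (f * g) = f * nabla N g + g * nabla N f := by
  simp only [nabla, pderiv_mul, Finset.sum_add_distrib, Finset.mul_sum]
  rw [add_comm]
  congr 1
  · exact Finset.sum_congr rfl fun i _ => mul_comm _ _

lemma nabla_C (a : ℤ) : nabla N (C a) = 0 := by
  simp [nabla, pderiv_C]

lemma nabla_one : nabla N 1 = 0 := by
  simpa using nabla_C (N := N) 1

lemma nabla_intCast (c : ℤ) : nabla N ((c : MvPolynomial (Fin N) ℤ)) = 0 := by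
  have : ((c : MvPolynomial (Fin N) ℤ)) = C c := by
    simp [MvPolynomial.C_eq_smul_one]
  rw [this]; exact nabla_C c

lemma nabla_prod {α : Type*} [DecidableEq α] (s : Finset α) (f : α → MvPolynomial (Fin N) ℤ) :
    nabla N (∏ x ∈ s, f x) = ∑ x ∈ s, (∏ y ∈ s.erase x, f y) * nabla N (f x) := by
  induction s using Finset.induction_on with
  | empty => simp [nabla_one]
  | @insert a s ha ih =>
      rw [Finset.prod_insert ha, nabla_mul, ih, Finset.sum_insert ha,
        Finset.erase_insert ha]
      rw [Finset.mul_sum, add_comm]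
      congr 1
      refine Finset.sum_congr rfl fun x hx => ?_
      rw [Finset.erase_insert_of_ne (by rintro rfl; exact ha hx),
        Finset.prod_insert (fun h => ha (Finset.mem_of_mem_erase h))]
      ring

/-- Derivative of a determinant, column version. -/
lemma nabla_det (M : Matrix (Fin N) (Fin N) (MvPolynomial (Fin N) ℤ)) :
    nabla N M.det = ∑ l, (M.updateCol l fun r => nabla N (M r l)).det := by
  rw [Matrix.det_apply', nabla_sum]
  have key : ∀ σ : Equiv.Perm (Fin N),
      nabla N (Equiv.Perm.sign σ * ∏ i, M (σ i) i) =
        ∑ l, Equiv.Perm.sign σ *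
          ((∏ i ∈ Finset.univ.erase l, M (σ i) i) * nabla N (M (σ l) l)) := by
    intro σ
    rw [nabla_mul, nabla_intCast, mul_zero, add_zero, nabla_prod, Finset.mul_sum]
  rw [Finset.sum_congr rfl fun σ _ => key σ, Finset.sum_comm]
  refine Finset.sum_congr rfl fun l _ => ?_
  rw [Matrix.det_apply']
  refine Finset.sum_congr rfl fun σ _ => ?_
  congr 1
  have : ∀ i, (M.updateCol l fun r => nabla N (M r l)) (σ i) i =
      Function.update (fun i => M (σ i) i) l (nabla N (M (σ l) l)) i := by
    intro i
    rw [Matrix.updateCol_apply, Function.update_apply]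
    split
    · subst ‹i = l›; rfl
    · rfl
  rw [Finset.prod_congr rfl fun i _ => this i,
    Finset.prod_update_of_mem (Finset.mem_univ l), Finset.sdiff_singleton_eq_erase]
  ring

lemma det_updateRow_eq_sum (A : Matrix (Fin N) (Fin N) (MvPolynomial (Fin N) ℤ))
    (k : Fin N) (v : Fin N → MvPolynomial (Fin N) ℤ) :
    (A.updateRow k v).det = ∑ l, v l * (A.adjugate) l k := by
  rw [← Matrix.cramer_transpose_apply, Matrix.cramer_eq_adjugate_mulVec]
  simp only [Matrix.mulVec, dotProduct]
  refine Finset.sum_congr rfl fun l _ => ?_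
  rw [← Matrix.adjugate_transpose, Matrix.transpose_apply, mul_comm]

lemma det_updateColumn_eq_sum (A : Matrix (Fin N) (Fin N) (MvPolynomial (Fin N) ℤ))
    (l : Fin N) (w : Fin N → MvPolynomial (Fin N) ℤ) :
    (A.updateCol l w).det = ∑ k, w k * (A.adjugate) l k := by
  rw [← Matrix.cramer_apply, Matrix.cramer_eq_adjugate_mulVec]
  simp only [Matrix.mulVec, dotProduct]
  refine Finset.sum_congr rfl fun k _ => ?_
  rw [mul_comm]

/-- Coefficients of `hh`. -/
lemma coeff_hh (n : ℤ) (m : Fin N →₀ ℕ) :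
    coeff m (hh N n) = if (∑ i, (m i : ℤ)) = n then 1 else 0 := by
  unfold hh
  by_cases hn : 0 ≤ n
  · rw [if_pos hn, coeff_sum]
    have hmono : ∀ d : Fin N → ℕ,
        (∏ i, (X i : MvPolynomial (Fin N) ℤ) ^ d i) =
          monomial (Finsupp.equivFunOnFinite.symm d) 1 := by
      intro d
      rw [MvPolynomial.monomial_eq]
      rw [map_one, one_mul]
      rw [Finsupp.prod_fintype]
      · rfl
      · intro i; exact pow_zero _
    have : ∀ d ∈ Finset.Nat.antidiagonalTuple N n.toNat,
        coeff m (∏ i, (X i : MvPolynomial (Fin N) ℤ) ^ d i) =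
          if d = (m : Fin N → ℕ) then 1 else 0 := by
      intro d _
      rw [hmono d, coeff_monomial]
      congr 1
      simp only [eq_iff_iff]
      constructor
      · intro h; rw [← h]; exact (Finsupp.equivFunOnFinite.apply_symm_apply d).symm
      · intro h; rw [h]; exact Finsupp.equivFunOnFinite_symm_coe m
    rw [Finset.sum_congr rfl this, Finset.sum_ite_eq' _ ((m : Fin N → ℕ)) (fun _ => (1 : ℤ))]
    have hmem : ((m : Fin N → ℕ) ∈ Finset.Nat.antidiagonalTuple N n.toNat) ↔
        (∑ i, (m i : ℤ)) = n := by
      rw [Finset.Nat.mem_antidiagonalTuple]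
      constructor
      · intro h
        have := congrArg (fun t : ℕ => (t : ℤ)) h
        push_cast at this
        rw [this]
        omega
      · intro h
        have : ((∑ i, m i : ℕ) : ℤ) = (n.toNat : ℤ) := by push_cast; omega
        exact_mod_cast this
    by_cases hm : (m : Fin N → ℕ) ∈ Finset.Nat.antidiagonalTuple N n.toNat
    · rw [if_pos hm, if_pos (hmem.mp hm)]
    · rw [if_neg hm, if_neg (fun h => hm (hmem.mpr h))]
  · rw [if_neg hn]
    have : ¬ (∑ i, (m i : ℤ)) = n := by
      intro h
      apply hn; rw [← h]
      positivity
    rw [if_neg this, coeff_zero]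

lemma coeff_pderiv (i : Fin N) (f : MvPolynomial (Fin N) ℤ) (m : Fin N →₀ ℕ) :
    coeff m (pderiv i f) = ((m i : ℤ) + 1) * coeff (m + Finsupp.single i 1) f := by
  induction f using MvPolynomial.induction_on' with
  | monomial s a =>
      rw [pderiv_monomial, coeff_monomial, coeff_monomial]
      have hsub : ∀ j, (s - Finsupp.single i 1 : Fin N →₀ ℕ) j = s j - (if i = j then 1 else 0) := by
        intro j; rw [Finsupp.tsub_apply, Finsupp.single_apply]
      by_cases hs : s = m + Finsupp.single i 1
      · subst hs
        rw [if_pos, if_pos rfl]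
        · rw [Finsupp.add_apply, Finsupp.single_eq_same]
          push_cast; ring
        · ext j
          rw [hsub, Finsupp.add_apply, Finsupp.single_apply]
          by_cases hj : i = j <;> simp [hj]
      · rw [if_neg hs]
        rcases Nat.eq_zero_or_pos (s i) with h0 | h0
        · simp [h0]
        · rw [if_neg, mul_zero]
          intro h2
          apply hs
          ext j
          have h3 := Finsupp.ext_iff.mp h2 j
          rw [hsub] at h3
          rw [Finsupp.add_apply, Finsupp.single_apply]
          by_cases hj : i = j
          · subst hj; simp at h3 ⊢; omega
          · simp [hj] at h3 ⊢; omega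
  | add p q hp hq =>
      rw [map_add, coeff_add, coeff_add, hp, hq, mul_add]

lemma coeff_nabla (f : MvPolynomial (Fin N) ℤ) (m : Fin N →₀ ℕ) :
    coeff m (nabla N f) = ∑ i, ((m i : ℤ) + 1) * coeff (m + Finsupp.single i 1) f := by
  rw [nabla, coeff_sum]
  exact Finset.sum_congr rfl fun i _ => coeff_pderiv i f m

/-- The key derivative identity `∇ h_n = (n + N - 1) h_{n-1}`. -/
lemma nabla_hh (n : ℤ) : nabla N (hh N n) = C (n + N - 1) * hh N (n - 1) := by
  apply MvPolynomial.ext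
  intro m
  rw [coeff_nabla, coeff_C_mul, coeff_hh]
  have hsum : ∀ i : Fin N,
      (∑ j, (((m + Finsupp.single i 1 : Fin N →₀ ℕ) j : ℕ) : ℤ)) = (∑ j, ((m j : ℕ) : ℤ)) + 1 := by
    intro i
    have h1 : ∀ j, (((m + Finsupp.single i 1 : Fin N →₀ ℕ) j : ℕ) : ℤ) =
        ((m j : ℕ) : ℤ) + (if i = j then (1 : ℤ) else 0) := by
      intro j
      rw [Finsupp.add_apply, Finsupp.single_apply]
      by_cases hj : i = j <;> simp [hj]
    rw [Finset.sum_congr rfl fun j _ => h1 j, Finset.sum_add_distrib,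
      Finset.sum_ite_eq Finset.univ i (fun _ => (1 : ℤ)), if_pos (Finset.mem_univ i)]
  have key : ∀ i : Fin N, ((m i : ℤ) + 1) * coeff (m + Finsupp.single i 1) (hh N n) =
      ((m i : ℤ) + 1) * (if (∑ j, ((m j : ℕ) : ℤ)) + 1 = n then 1 else 0) := by
    intro i
    rw [coeff_hh, hsum i]
  rw [Finset.sum_congr rfl fun i _ => key i, ← Finset.sum_mul]
  by_cases hc : (∑ j, ((m j : ℕ) : ℤ)) + 1 = n
  · rw [if_pos hc, if_pos (by omega)]
    have h2 : (∑ i : Fin N, ((m i : ℤ) + 1)) = (∑ j, ((m j : ℕ) : ℤ)) + N := by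
      rw [Finset.sum_add_distrib]
      simp
    rw [h2, mul_one, mul_one]
    omega
  · rw [if_neg hc, if_neg (by omega)]
    simp

/-- The Jacobi-Trudi matrix of `lam` (with `mu = 0`). -/
noncomputable def JT (lam : Fin N → ℤ) : Matrix (Fin N) (Fin N) (MvPolynomial (Fin N) ℤ) :=
  Matrix.of fun i j : Fin N => hh N (lam i - (0 : Fin N → ℤ) j - (i : ℤ) + (j : ℤ))

lemma skewSchur_eq (lam : Fin N → ℤ) : skewSchur N lam 0 = (JT lam).det := rfl

lemma JT_apply (lam : Fin N → ℤ) (i j : Fin N) :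
    JT lam i j = hh N (lam i - (i : ℤ) + (j : ℤ)) := by
  show hh N (lam i - (0 : Fin N → ℤ) j - (i : ℤ) + (j : ℤ)) = _
  congr 1
  simp

lemma row_det (lam : Fin N → ℤ) (k : Fin N) :
    ((JT lam).updateRow k fun j => hh N (lam k - (k : ℤ) + (j : ℤ) - 1)).det =
      skewSchur N (lam - ee k) 0 := by
  rw [skewSchur_eq]
  congr 1
  apply Matrix.ext
  intro i j
  rw [Matrix.updateRow_apply]
  by_cases hik : i = k
  · subst hik
    rw [if_pos rfl]
    show _ = hh N ((lam - ee i) i - (0 : Fin N → ℤ) j - (i : ℤ) + (j : ℤ))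
    congr 1
    simp [ee]
    ring
  · rw [if_neg hik, JT_apply]
    show _ = hh N ((lam - ee k) i - (0 : Fin N → ℤ) j - (i : ℤ) + (j : ℤ))
    congr 1
    simp [ee, hik]

lemma vanish (lam : Fin N → ℤ) (hlam : IsPar lam) (k : Fin N)
    (hk : ¬ IsPar (lam - ee k)) : skewSchur N (lam - ee k) 0 = 0 := by
  rw [skewSchur_eq]
  by_cases hk1 : (k : ℕ) + 1 < N
  · set k' : Fin N := ⟨(k : ℕ) + 1, hk1⟩ with hk'
    have hkk' : k ≠ k' := by
      intro h
      have := congrArg Fin.val h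
      simp [hk'] at this
    by_cases heq : lam k' = lam k
    · apply Matrix.det_zero_of_row_eq hkk'
      funext j
      show hh N _ = hh N _
      congr 1
      have h1 : (lam - ee k) k = lam k - 1 := by simp [ee]
      have h2 : (lam - ee k) k' = lam k' := by simp [ee, Ne.symm hkk']
      rw [h1, h2, heq]
      have : ((k' : Fin N) : ℤ) = (k : ℤ) + 1 := by
        simp [hk']
      rw [this]
      ring
    · exfalso
      apply hk
      have hmono := hlam.1
      have hpos := hlam.2
      have hlt : lam k' < lam k := lt_of_le_of_ne (hmono k k' (by simp [Fin.le_def, hk'])) heq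
      constructor
      · intro i j hij
        by_cases hi : i = k
        · subst hi
          by_cases hj : j = i
          · subst hj; exact le_refl _
          · have hij' : (i : ℕ) < (j : ℕ) := by
              rcases lt_or_eq_of_le (Fin.le_def.mp hij) with h | h
              · exact h
              · exact absurd (Fin.ext h).symm hj
            have hk'j : k' ≤ j := by
              rw [Fin.le_def]
              simp [hk']
              omega
            have : lam j ≤ lam k' := hmono k' j hk'j
            have hja : (lam - ee i) j = lam j := by
              simp [ee]
              intro h; exact hj h
            have hia : (lam - ee i) i = lam i - 1 := by simp [ee]
            rw [hja, hia]
            omega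
        · by_cases hj : j = k
          · subst hj
            have : (lam - ee j) i = lam i := by simp [ee, hi]
            rw [this]
            have : (lam - ee j) j = lam j - 1 := by simp [ee]
            rw [this]
            have := hmono i j hij
            omega
          · have h1 : (lam - ee k) i = lam i := by simp [ee, hi]
            have h2 : (lam - ee k) j = lam j := by simp [ee, hj]
            rw [h1, h2]
            exact hmono i j hij
      · intro i
        by_cases hi : i = k
        · subst hi
          have : (lam - ee i) i = lam i - 1 := by simp [ee]
          rw [this]
          have := hpos k'
          omega
        · have : (lam - ee k) i = lam i := by simp [ee, hi]
          rw [this]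
          exact hpos i
  · have hkN : (k : ℕ) + 1 = N := by
      have := k.isLt
      omega
    by_cases h0 : lam k = 0
    · apply Matrix.det_eq_zero_of_row_eq_zero k
      intro j
      show hh N _ = 0
      have hneg : (lam - ee k) k - (0 : Fin N → ℤ) j - (k : ℤ) + (j : ℤ) < 0 := by
        have h1 : (lam - ee k) k = lam k - 1 := by simp [ee]
        have hj : (j : ℕ) < N := j.isLt
        have : ((j : ℕ) : ℤ) ≤ ((k : ℕ) : ℤ) := by
          omega
        rw [h1, h0]
        simp
        omega
      unfold hh
      rw [if_neg (by omega)]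
    · exfalso
      apply hk
      have hmono := hlam.1
      have hpos := hlam.2
      constructor
      · intro i j hij
        by_cases hi : i = k
        · subst hi
          have hj : j = i := by
            apply Fin.ext
            have h1 := Fin.le_def.mp hij
            have h2 := j.isLt
            omega
          subst hj
          exact le_refl _
        · by_cases hj : j = k
          · subst hj
            have e1 : (lam - ee j) i = lam i := by simp [ee, hi]
            have e2 : (lam - ee j) j = lam j - 1 := by simp [ee]
            rw [e1, e2]
            have := hmono i j hij
            omega
          · have h1 : (lam - ee k) i = lam i := by simp [ee, hi]
            have h2 : (lam - ee k) j = lam j := by simp [ee, hj]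
            rw [h1, h2]
            exact hmono i j hij
      · intro i
        by_cases hi : i = k
        · subst hi
          have : (lam - ee i) i = lam i - 1 := by simp [ee]
          rw [this]
          have := hpos i
          omega
        · have : (lam - ee k) i = lam i := by simp [ee, hi]
          rw [this]
          exact hpos i

end NablaSchurAux

open NablaSchurAux in
theorem nabla_schur (N : ℕ) (lam : Fin N → ℤ) (hlam : IsPar lam) :
    nabla N (skewSchur N lam 0) =
      ∑ i ∈ Finset.univ.filter (fun i : Fin N => IsPar (lam - ee i)),
        C ((lam i - ((i : ℤ) + 1)) + (N : ℤ)) * skewSchur N (lam - ee i) 0 := by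
  classical
  set A := JT lam with hA
  have hent : ∀ i j : Fin N, nabla N (A i j) =
      C ((lam i - ((i : ℤ) + 1)) + (N : ℤ)) * hh N (lam i - (i : ℤ) + (j : ℤ) - 1)
        + C ((j : ℤ)) * hh N (lam i - (i : ℤ) + (j : ℤ) - 1) := by
    intro i j
    rw [hA, JT_apply, nabla_hh]
    rw [← add_mul, ← map_add]
    congr 2
    ring
  rw [skewSchur_eq, nabla_det]
  have step1 : ∀ l : Fin N, ((JT lam).updateCol l fun r => nabla N (JT lam r l)).det
      = (∑ k, (C ((lam k - ((k : ℤ) + 1)) + (N : ℤ)) *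
            hh N (lam k - (k : ℤ) + (l : ℤ) - 1)) * (JT lam).adjugate l k)
        + ∑ k, (C ((l : ℤ)) * hh N (lam k - (k : ℤ) + (l : ℤ) - 1)) * (JT lam).adjugate l k := by
    intro l
    rw [det_updateColumn_eq_sum, ← Finset.sum_add_distrib]
    refine Finset.sum_congr rfl fun k _ => ?_
    rw [hent k l]
    ring
  rw [Finset.sum_congr rfl fun l _ => step1 l, Finset.sum_add_distrib]
  have part2 : (∑ l : Fin N, ∑ k, (C ((l : ℤ)) *
      hh N (lam k - (k : ℤ) + (l : ℤ) - 1)) * (JT lam).adjugate l k) = 0 := by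
    refine Finset.sum_eq_zero fun l _ => ?_
    have hfac : (∑ k, (C ((l : ℤ)) * hh N (lam k - (k : ℤ) + (l : ℤ) - 1)) *
        (JT lam).adjugate l k)
        = C ((l : ℤ)) * ∑ k, hh N (lam k - (k : ℤ) + (l : ℤ) - 1) * (JT lam).adjugate l k := by
      rw [Finset.mul_sum]
      exact Finset.sum_congr rfl fun k _ => by ring
    rw [hfac, ← det_updateColumn_eq_sum]
    rcases l with ⟨lv, hl⟩
    cases lv with
    | zero => simp
    | succ mv =>
        set l : Fin N := ⟨mv + 1, hl⟩ with hldef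
        set l' : Fin N := ⟨mv, Nat.lt_of_succ_lt hl⟩ with hl'def
        have hll' : l' ≠ l := by
          intro h
          have := congrArg Fin.val h
          simp [hldef, hl'def] at this
        have hcol : ∀ k, hh N (lam k - (k : ℤ) + (l : ℤ) - 1) = JT lam k l' := by
          intro k
          rw [JT_apply]
          congr 1
          have h1 : ((l : Fin N) : ℤ) = (mv : ℤ) + 1 := by simp [hldef]
          have h2 : ((l' : Fin N) : ℤ) = (mv : ℤ) := by simp [hl'def]
          rw [h1, h2]
          ring
        have hdet : ((JT lam).updateCol l fun k =>
            hh N (lam k - (k : ℤ) + (l : ℤ) - 1)).det = 0 := by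
          apply Matrix.det_zero_of_column_eq hll'
          intro k
          rw [Matrix.updateCol_apply, Matrix.updateCol_apply,
            if_neg hll', if_pos rfl, hcol k]
        rw [hdet, mul_zero]
  rw [part2, add_zero, Finset.sum_comm]
  have part1 : ∀ k : Fin N, (∑ l : Fin N, (C ((lam k - ((k : ℤ) + 1)) + (N : ℤ)) *
      hh N (lam k - (k : ℤ) + (l : ℤ) - 1)) * (JT lam).adjugate l k)
      = C ((lam k - ((k : ℤ) + 1)) + (N : ℤ)) * skewSchur N (lam - ee k) 0 := by
    intro k
    have hfac : (∑ l : Fin N, (C ((lam k - ((k : ℤ) + 1)) + (N : ℤ)) *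
        hh N (lam k - (k : ℤ) + (l : ℤ) - 1)) * (JT lam).adjugate l k)
        = C ((lam k - ((k : ℤ) + 1)) + (N : ℤ)) *
          ∑ l : Fin N, hh N (lam k - (k : ℤ) + (l : ℤ) - 1) * (JT lam).adjugate l k := by
      rw [Finset.mul_sum]
      exact Finset.sum_congr rfl fun l _ => by ring
    rw [hfac, ← det_updateRow_eq_sum, row_det]
  rw [Finset.sum_congr rfl fun k _ => part1 k]
  symm
  apply Finset.sum_filter_of_ne
  intro k _ hne
  by_contra hk
  exact hne (by rw [vanish lam hlam k hk, mul_zero])
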